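/- arXiv:2508.07657 — 4 statements merged into one kernel-verified Lean document; each statement's English description precedes it below -/
import Mathlib

section
/- Let N be a finite nonempty index set, let T > 0 be a real number, and let 0 < t_1 < t_2 < ⋯ be a strictly increasing sequence of return times with t_i → ∞. Suppose at each return time t_i a vector v_i : N → ℝ with 0 ≤ v_i(n) ≤ t_i for all n is delivered, and define the operator's knowledge u(t)(n) as the maximum of 0 and all values v_i(n) over indices i with t_i ≤ t, the latency δ(t) = max over n in N of (t − u(t)(n)), and χ_i = min over n in N of v_i(n) with χ_0 = 0. If (I) t_i ≤ T + χ_{i−1} for every i ≥ 1, and (II) χ_i > χ_{i−1} for every i ≥ 1, then δ(t) ≤ T for all t ≥ 0. -/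
/-- Proposition 1 (latency bound at return events): if each return event happens
before the latency exceeds the bound `T` and the delivered minimum timestamps
strictly increase, then the operator's latency is bounded by `T` at all times. -/
theorem latency_bound_at_return_events
    {ι : Type*} [Fintype ι] [Nonempty ι]
    (T : ℝ) (hT : 0 < T)
    (t : ℕ → ℝ)
    (ht1 : 0 < t 1)
    (htmono : ∀ i, 1 ≤ i → t i < t (i + 1))
    (htinf : Filter.Tendsto t Filter.atTop Filter.atTop)
    (v : ℕ → ι → ℝ)
    (hv0 : ∀ i, 1 ≤ i → ∀ n, 0 ≤ v i n)
    (hvt : ∀ i, 1 ≤ i → ∀ n, v i n ≤ t i)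
    (u : ℝ → ι → ℝ)
    (hu : ∀ τ n, u τ n = sSup (insert (0 : ℝ) {x | ∃ i, 1 ≤ i ∧ t i ≤ τ ∧ x = v i n}))
    (δ : ℝ → ℝ)
    (hδ : ∀ τ, δ τ = Finset.univ.sup' Finset.univ_nonempty (fun n => τ - u τ n))
    (χ : ℕ → ℝ)
    (hχ0 : χ 0 = 0)
    (hχ : ∀ i, 1 ≤ i → χ i = Finset.univ.inf' Finset.univ_nonempty (fun n => v i n))
    (hI : ∀ i, 1 ≤ i → t i ≤ T + χ (i - 1))
    (hII : ∀ i, 1 ≤ i → χ (i - 1) < χ i) :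
    ∀ τ : ℝ, 0 ≤ τ → δ τ ≤ T := by
  classical
  intro τ hτ
  -- t is ≥ t 1 for all i ≥ 1
  have hmono1 : ∀ i, 1 ≤ i → t 1 ≤ t i := by
    intro i hi
    induction i with
    | zero => omega
    | succ k ih =>
      rcases Nat.lt_or_ge 1 (k + 1) with h | h
      · have hk : 1 ≤ k := by omega
        exact le_trans (ih hk) (le_of_lt (htmono k hk))
      · have : k + 1 = 1 := by omega
        rw [this]
  rw [hδ]
  apply Finset.sup'_le
  intro n _
  -- goal : τ - u τ n ≤ T
  have hbdd : BddAbove (insert (0 : ℝ) {x | ∃ i, 1 ≤ i ∧ t i ≤ τ ∧ x = v i n}) := by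
    refine ⟨max τ 0, ?_⟩
    rintro x (rfl | ⟨i, hi, hti, rfl⟩)
    · exact le_max_right _ _
    · exact le_max_of_le_left (le_trans (hvt i hi n) hti)
  by_cases hcase : τ < t 1
  · -- the set of delivered values is empty, u τ n = 0
    have hempty : {x | ∃ i, 1 ≤ i ∧ t i ≤ τ ∧ x = v i n} = ∅ := by
      ext x
      simp only [Set.mem_setOf_eq, Set.mem_empty_iff_false, iff_false]
      rintro ⟨i, hi, hti, rfl⟩
      exact absurd (le_trans (hmono1 i hi) hti) (not_le.mpr hcase)
    have hu0 : u τ n = 0 := by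
      rw [hu, hempty]
      simp
    rw [hu0]
    have hT1 : t 1 ≤ T := by
      have := hI 1 le_rfl
      simpa [hχ0] using this
    linarith
  · push_neg at hcase
    -- there is a greatest i ≥ 1 with t i ≤ τ
    obtain ⟨M, hM⟩ := (htinf.eventually (Filter.eventually_gt_atTop τ)).exists_forall_of_atTop
    set P : ℕ → Prop := fun i => 1 ≤ i ∧ t i ≤ τ with hP
    have hM1 : 1 ≤ M ⊔ 1 := le_max_right _ _
    set i := Nat.findGreatest P (M ⊔ 1) with hidef
    have hPi : P i := Nat.findGreatest_spec hM1 ⟨le_rfl, hcase⟩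
    obtain ⟨hi1, hti⟩ := hPi
    -- t (i+1) > τ
    have hnext : τ < t (i + 1) := by
      rcases Nat.lt_or_ge (M ⊔ 1) (i + 1) with h | h
      · exact hM (i + 1) (le_trans (le_max_left _ _) h.le)
      · by_contra hc
        push_neg at hc
        have hlt : i < i + 1 := Nat.lt_succ_self i
        exact Nat.findGreatest_is_greatest hlt h ⟨by omega, hc⟩
    -- u τ n ≥ v i n ≥ χ i
    have huge : v i n ≤ u τ n := by
      rw [hu]
      exact le_csSup hbdd (Set.mem_insert_iff.mpr (Or.inr ⟨i, hi1, hti, rfl⟩))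
    have hχle : χ i ≤ v i n := by
      rw [hχ i hi1]
      exact Finset.inf'_le _ (Finset.mem_univ n)
    have hImp : t (i + 1) ≤ T + χ i := by
      have := hI (i + 1) (by omega)
      simpa using this
    linarith
end

section
/- In the cyclic gossip model with N ≥ 2 robots, for every event index k and every robot n ∈ ZMod N, the common vector held by the two participants of event k after that event satisfies: V_{k+1}(k mod N)(n) = s_j, where j is the largest index with j ≤ k such that n = j mod N or n = (j+1) mod N, and V_{k+1}(k mod N)(n) = 0 if no such j exists. In other words, after each event the participants know, for every robot n, exactly the timestamp of the most recent event up to k in which robot n participated. -/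
section GossipAux

variable {N : ℕ} [NeZero N]
variable (s : ℕ → ℝ) (V : ℕ → ZMod N → ZMod N → ℝ)
variable (hVstep : ∀ (k : ℕ) (i n : ZMod N),
      V (k + 1) i n =
        if i = (k : ZMod N) ∨ i = ((k + 1 : ℕ) : ZMod N) then
          (if n = (k : ZMod N) ∨ n = ((k + 1 : ℕ) : ZMod N) then s k
           else max (V k (k : ZMod N) n) (V k ((k + 1 : ℕ) : ZMod N) n))
        else V k i n)

include hVstep

omit [NeZero N] in
/-- A robot's vector is unchanged over a window of events in which it does not
participate. -/
lemma gossip_unchanged (i n : ZMod N) :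
    ∀ a b : ℕ, a ≤ b →
      (∀ m, a ≤ m → m < b → ¬(i = (m : ZMod N) ∨ i = ((m + 1 : ℕ) : ZMod N))) →
      V b i n = V a i n := by
  intro a b hab
  induction b, hab using Nat.le_induction with
  | base => intro _; rfl
  | succ b hab ih =>
    intro h
    rw [hVstep, if_neg (h b hab (Nat.lt_succ_self b)),
      ih (fun m hm hmb => h m hm (hmb.trans (Nat.lt_succ_self b)))]

omit [NeZero N] in
/-- Both participants of event `k` hold the same vector after the event. -/
lemma gossip_pair (k : ℕ) (i n : ZMod N)
    (hi : i = (k : ZMod N) ∨ i = ((k + 1 : ℕ) : ZMod N)) :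
    V (k + 1) i n = V (k + 1) (k : ZMod N) n := by
  rw [hVstep, hVstep, if_pos hi, if_pos (Or.inl rfl)]

end GossipAux

lemma gossip_main
    (N : ℕ) [NeZero N] (hN : 2 ≤ N)
    (s : ℕ → ℝ) (hs0 : 0 < s 0) (hsmono : StrictMono s)
    (V : ℕ → ZMod N → ZMod N → ℝ)
    (hV0 : ∀ i n : ZMod N, V 0 i n = 0)
    (hVstep : ∀ (k : ℕ) (i n : ZMod N),
      V (k + 1) i n =
        if i = (k : ZMod N) ∨ i = ((k + 1 : ℕ) : ZMod N) then
          (if n = (k : ZMod N) ∨ n = ((k + 1 : ℕ) : ZMod N) then s k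
           else max (V k (k : ZMod N) n) (V k ((k + 1 : ℕ) : ZMod N) n))
        else V k i n) :
    ∀ (k : ℕ) (n : ZMod N),
      ((∃ j, j ≤ k ∧ (n = (j : ZMod N) ∨ n = ((j + 1 : ℕ) : ZMod N))) →
        V (k + 1) (k : ZMod N) n =
          s (Nat.findGreatest (fun j => n = (j : ZMod N) ∨ n = ((j + 1 : ℕ) : ZMod N)) k)) ∧
      ((¬ ∃ j, j ≤ k ∧ (n = (j : ZMod N) ∨ n = ((j + 1 : ℕ) : ZMod N))) →
        V (k + 1) (k : ZMod N) n = 0) := by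
  classical
  have hspos : ∀ j, 0 < s j := fun j => lt_of_lt_of_le hs0 (hsmono.monotone (Nat.zero_le j))
  -- key ZMod fact: casts of naturals whose difference is in (0, N) are distinct
  have hne : ∀ a b : ℕ, b < a → a - b < N → ((a : ZMod N) ≠ (b : ZMod N)) := by
    intro a b hba hlt h
    rw [ZMod.natCast_eq_natCast_iff] at h
    have hdvd : N ∣ a - b := (Nat.modEq_iff_dvd' hba.le).mp h.symm
    have := Nat.le_of_dvd (Nat.sub_pos_of_lt hba) hdvd
    omega
  intro k
  induction k using Nat.strong_induction_on with
  | _ k ih =>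
  intro n
  set P : ℕ → Prop := fun j => n = (j : ZMod N) ∨ n = ((j + 1 : ℕ) : ZMod N) with hPdef
  by_cases hPk : P k
  · -- the participants case: value is s k, and findGreatest = k
    have hval : V (k + 1) (k : ZMod N) n = s k := by
      rw [hVstep, if_pos (Or.inl rfl), if_pos hPk]
    have hfg : Nat.findGreatest P k = k :=
      le_antisymm (Nat.findGreatest_le k) (Nat.le_findGreatest le_rfl hPk)
    constructor
    · intro _; rw [hval, hfg]
    · intro hcon; exact absurd ⟨k, le_rfl, hPk⟩ hcon
  · -- n is not a participant of event k
    have hval : V (k + 1) (k : ZMod N) n =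
        max (V k (k : ZMod N) n) (V k ((k + 1 : ℕ) : ZMod N) n) := by
      rw [hVstep, if_pos (Or.inl rfl), if_neg hPk]
    match k, hPk, hval, ih with
    | 0, hPk, hval, ih =>
      constructor
      · rintro ⟨j, hj, hPj⟩
        interval_cases j
        exact absurd hPj hPk
      · intro _
        rw [hval, hV0, hV0]
        simp
    | (k' + 1), hPk, hval, ih =>
      set k := k' + 1 with hk
      -- A: vector of robot k before event k, via event k'
      have hA : V k (k : ZMod N) n = V (k' + 1) ((k' : ℕ) : ZMod N) n :=
        gossip_pair s V hVstep k' ((k : ℕ) : ZMod N) n (Or.inr rfl)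
      -- characterize B := V k ((k+1 : ℕ) : ZMod N) n
      have hBle : (∃ j, j ≤ k' ∧ P j) →
          V k ((k + 1 : ℕ) : ZMod N) n ≤ s (Nat.findGreatest P k') := by
        intro hex'
        by_cases hNk : N ≤ k + 1
        · -- robot k+1 last participated at event j0 = k+1-N
          set j0 : ℕ := k + 1 - N with hj0
          have hj0N : j0 + N = k + 1 := Nat.sub_add_cancel hNk
          have hj0k' : j0 ≤ k' := by omega
          have hr : ((k + 1 : ℕ) : ZMod N) = ((j0 : ℕ) : ZMod N) := by
            rw [ZMod.natCast_eq_natCast_iff]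
            have : (k + 1) % N = j0 % N := by
              conv_lhs => rw [← hj0N]
              simp [Nat.add_mod_right]
            exact this
          have hB1 : V k ((k + 1 : ℕ) : ZMod N) n = V (j0 + 1) ((k + 1 : ℕ) : ZMod N) n := by
            apply gossip_unchanged s V hVstep _ _ _ _ (by omega)
            intro m hm hmk
            push_neg
            constructor
            · exact hne (k + 1) m (by omega) (by omega)
            · exact hne (k + 1) (m + 1) (by omega) (by omega)
          have hB2 : V (j0 + 1) ((k + 1 : ℕ) : ZMod N) n = V (j0 + 1) ((j0 : ℕ) : ZMod N) n :=
            gossip_pair s V hVstep j0 _ n (Or.inl hr)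
          rw [hB1, hB2]
          by_cases hex0 : ∃ j, j ≤ j0 ∧ P j
          · have := (ih j0 (by omega) n).1 hex0
            rw [this]
            apply hsmono.monotone
            obtain ⟨j, hj, hPj⟩ := hex0
            exact Nat.le_findGreatest ((Nat.findGreatest_le j0).trans hj0k')
              (Nat.findGreatest_spec hj hPj)
          · rw [(ih j0 (by omega) n).2 hex0]
            exact (hspos _).le
        · -- robot k+1 never participated before event k
          have hB : V k ((k + 1 : ℕ) : ZMod N) n = 0 := by
            rw [gossip_unchanged s V hVstep _ _ 0 k (Nat.zero_le k) ?_, hV0]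
            intro m _ hmk
            push_neg
            constructor
            · exact hne (k + 1) m (by omega) (by omega)
            · exact hne (k + 1) (m + 1) (by omega) (by omega)
          rw [hB]
          exact (hspos _).le
      have hBzero : (¬ ∃ j, j ≤ k' ∧ P j) → V k ((k + 1 : ℕ) : ZMod N) n = 0 := by
        intro hnex
        by_cases hNk : N ≤ k + 1
        · set j0 : ℕ := k + 1 - N with hj0
          have hj0N : j0 + N = k + 1 := Nat.sub_add_cancel hNk
          have hj0k' : j0 ≤ k' := by omega
          have hr : ((k + 1 : ℕ) : ZMod N) = ((j0 : ℕ) : ZMod N) := by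
            rw [ZMod.natCast_eq_natCast_iff]
            have : (k + 1) % N = j0 % N := by
              conv_lhs => rw [← hj0N]
              simp [Nat.add_mod_right]
            exact this
          have hB1 : V k ((k + 1 : ℕ) : ZMod N) n = V (j0 + 1) ((k + 1 : ℕ) : ZMod N) n := by
            apply gossip_unchanged s V hVstep _ _ _ _ (by omega)
            intro m hm hmk
            push_neg
            constructor
            · exact hne (k + 1) m (by omega) (by omega)
            · exact hne (k + 1) (m + 1) (by omega) (by omega)
          have hB2 : V (j0 + 1) ((k + 1 : ℕ) : ZMod N) n = V (j0 + 1) ((j0 : ℕ) : ZMod N) n :=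
            gossip_pair s V hVstep j0 _ n (Or.inl hr)
          rw [hB1, hB2]
          exact (ih j0 (by omega) n).2
            (fun ⟨j, hj, hPj⟩ => hnex ⟨j, hj.trans hj0k', hPj⟩)
        · rw [gossip_unchanged s V hVstep _ _ 0 k (Nat.zero_le k) ?_, hV0]
          intro m _ hmk
          push_neg
          constructor
          · exact hne (k + 1) m (by omega) (by omega)
          · exact hne (k + 1) (m + 1) (by omega) (by omega)
      have hexiff : (∃ j, j ≤ k ∧ P j) ↔ (∃ j, j ≤ k' ∧ P j) := by
        constructor
        · rintro ⟨j, hj, hPj⟩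
          refine ⟨j, ?_, hPj⟩
          rcases Nat.lt_or_ge j k with h | h
          · omega
          · have hjk : j = k := by omega
            exact absurd (hjk ▸ hPj) hPk
        · rintro ⟨j, hj, hPj⟩; exact ⟨j, by omega, hPj⟩
      have hfg : Nat.findGreatest P k = Nat.findGreatest P k' := by
        rw [hk, Nat.findGreatest_succ, if_neg hPk]
      constructor
      · intro hex
        have hex' := hexiff.mp hex
        have hAval : V k (k : ZMod N) n = s (Nat.findGreatest P k') := by
          rw [hA]; exact (ih k' (by omega) n).1 hex'
        rw [hval, hfg, hAval]
        exact max_eq_left (hBle hex')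
      · intro hnex
        have hnex' := fun h => hnex (hexiff.mpr h)
        have hAval : V k (k : ZMod N) n = 0 := by
          rw [hA]; exact (ih k' (by omega) n).2 hnex'
        rw [hval, hAval, hBzero hnex']
        simp

/-- In the cyclic gossip model on a ring of `N ≥ 2` robots, after each event the
two participants know, for every robot `n`, exactly the timestamp of the most
recent event (up to the current one) in which robot `n` participated, and `0`
if robot `n` has not participated in any event yet. -/
theorem gossip_participants_know_latest_event
    (N : ℕ) [NeZero N] (hN : 2 ≤ N)
    (s : ℕ → ℝ) (hs0 : 0 < s 0) (hsmono : StrictMono s)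
    (V : ℕ → ZMod N → ZMod N → ℝ)
    (hV0 : ∀ i n : ZMod N, V 0 i n = 0)
    (hVstep : ∀ (k : ℕ) (i n : ZMod N),
      V (k + 1) i n =
        if i = (k : ZMod N) ∨ i = ((k + 1 : ℕ) : ZMod N) then
          (if n = (k : ZMod N) ∨ n = ((k + 1 : ℕ) : ZMod N) then s k
           else max (V k (k : ZMod N) n) (V k ((k + 1 : ℕ) : ZMod N) n))
        else V k i n) :
    ∀ (k : ℕ) (n : ZMod N),
      ((∃ j, j ≤ k ∧ (n = (j : ZMod N) ∨ n = ((j + 1 : ℕ) : ZMod N))) →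
        ∃ j, j ≤ k ∧ (n = (j : ZMod N) ∨ n = ((j + 1 : ℕ) : ZMod N)) ∧
          (∀ j', j' ≤ k → (n = (j' : ZMod N) ∨ n = ((j' + 1 : ℕ) : ZMod N)) → j' ≤ j) ∧
          V (k + 1) (k : ZMod N) n = s j) ∧
      ((¬ ∃ j, j ≤ k ∧ (n = (j : ZMod N) ∨ n = ((j + 1 : ℕ) : ZMod N))) →
        V (k + 1) (k : ZMod N) n = 0) := by
  intro k n
  obtain ⟨h1, h2⟩ := gossip_main N hN s hs0 hsmono V hV0 hVstep k n
  refine ⟨?_, h2⟩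
  intro hex
  obtain ⟨j, hj, hPj⟩ := hex
  refine ⟨Nat.findGreatest (fun j => n = (j : ZMod N) ∨ n = ((j + 1 : ℕ) : ZMod N)) k,
    Nat.findGreatest_le k, by simpa using Nat.findGreatest_spec (P := fun j => n = (j : ZMod N) ∨ n = ((j + 1 : ℕ) : ZMod N)) hj hPj,
    fun j' h1' h2' => Nat.le_findGreatest h1' h2', h1 ⟨j, hj, hPj⟩⟩
end

section
/- In the cyclic gossip model with N ≥ 2 robots, for every event index k ≥ N − 2, the minimum entry of the participants' common vector after event k equals the event time from N − 2 events earlier: min over n ∈ ZMod N of V_{k+1}(k mod N)(n) = s_{k−N+2} (and this minimum equals 0 whenever k < N − 2). Consequently, since the event times s_k are strictly increasing, the sequence k ↦ min_n V_{k+1}(k mod N)(n) is strictly increasing for k ≥ N − 2. -/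
/-- Combinatorial core of Lemma 1: in the cyclic gossip model with `N ≥ 2`
robots, for `k ≥ N - 2` the minimum entry of the participants' common vector
after event `k` equals the event time from `N - 2` events earlier (and it is
`0` for `k < N - 2`); consequently this sequence of minima is strictly
increasing for `k ≥ N - 2`. -/
theorem gossip_min_delivered_timestamp
    (N : ℕ) [NeZero N] (hN : 2 ≤ N)
    (s : ℕ → ℝ) (hs0 : 0 < s 0) (hsmono : StrictMono s)
    (V : ℕ → ZMod N → ZMod N → ℝ)
    (hV0 : ∀ i n : ZMod N, V 0 i n = 0)
    (hVstep : ∀ (k : ℕ) (i n : ZMod N),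
      V (k + 1) i n =
        if i = (k : ZMod N) ∨ i = ((k + 1 : ℕ) : ZMod N) then
          (if n = (k : ZMod N) ∨ n = ((k + 1 : ℕ) : ZMod N) then s k
           else max (V k (k : ZMod N) n) (V k ((k + 1 : ℕ) : ZMod N) n))
        else V k i n) :
    (∀ k : ℕ, N - 2 ≤ k →
      Finset.univ.inf' Finset.univ_nonempty (fun n => V (k + 1) (k : ZMod N) n)
        = s (k + 2 - N)) ∧
    (∀ k : ℕ, k < N - 2 →
      Finset.univ.inf' Finset.univ_nonempty (fun n => V (k + 1) (k : ZMod N) n)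
        = 0) ∧
    (∀ k k' : ℕ, N - 2 ≤ k → k < k' →
      Finset.univ.inf' Finset.univ_nonempty (fun n => V (k + 1) (k : ZMod N) n)
        < Finset.univ.inf' Finset.univ_nonempty (fun n => V (k' + 1) (k' : ZMod N) n)) := by
  have hspos : ∀ m, 0 < s m := fun m => lt_of_lt_of_le hs0 (hsmono.monotone (Nat.zero_le m))
  -- cast helpers (difference exactly N, resp. strictly between 0 and N)
  have castEq : ∀ a b : ℕ, a = b + N → ((a : ZMod N) = (b : ZMod N)) := by
    intro a b h; subst h; push_cast; simp
  have castNe : ∀ a b : ℕ, b < a → a < b + N → ((a : ZMod N) ≠ (b : ZMod N)) := by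
    intro a b h1 h2 heq
    have hd := (Nat.modEq_iff_dvd' h1.le).mp ((ZMod.natCast_eq_natCast_iff _ _ _).mp heq).symm
    have := Nat.le_of_dvd (by omega) hd
    omega
  -- closed form
  set G : ℕ → ℕ → ℝ := fun k t =>
    if t = 0 then s k else if N ≤ k + 1 + t then s (k + 1 + t - N) else 0 with hG
  have Gnonneg : ∀ k t, 0 ≤ G k t := by
    intro k t
    simp only [hG]
    split
    · exact (hspos _).le
    split
    · exact (hspos _).le
    · exact le_refl 0
  -- stability: untouched robots keep their vectors
  have stab : ∀ (i : ZMod N) (a d : ℕ),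
      (∀ m, a ≤ m → m < a + d → i ≠ ((m : ℕ) : ZMod N) ∧ i ≠ ((m + 1 : ℕ) : ZMod N)) →
      ∀ n, V (a + d) i n = V a i n := by
    intro i a d
    induction d with
    | zero => intro _ n; rfl
    | succ d ihd =>
      intro h n
      have hid := h (a + d) (by omega) (by omega)
      rw [show a + (d + 1) = (a + d) + 1 from rfl, hVstep]
      rw [if_neg (by push_neg; exact hid)]
      exact ihd (fun m h1 h2 => h m h1 (by omega)) n
  -- main closed form by strong induction
  have key : ∀ k t, t < N →
      V (k + 1) ((k : ℕ) : ZMod N) (((k + 1 + t : ℕ)) : ZMod N) = G k t := by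
    intro k
    induction k using Nat.strong_induction_on with
    | _ k IH =>
    intro t ht
    rw [hVstep, if_pos (Or.inl rfl)]
    by_cases h0 : t = 0
    · subst h0
      rw [if_pos (Or.inr rfl)]
      simp [hG]
    by_cases hN1 : t = N - 1
    · subst hN1
      rw [if_pos (Or.inl (castEq _ _ (by omega)))]
      simp only [hG]
      rw [if_neg (by omega), if_pos (by omega)]
      congr 1; omega
    -- middle case : 1 ≤ t ≤ N - 2
    have hcond : ¬((((k + 1 + t : ℕ)) : ZMod N) = ((k : ℕ) : ZMod N) ∨
        (((k + 1 + t : ℕ)) : ZMod N) = (((k + 1 : ℕ)) : ZMod N)) := by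
      push_neg
      exact ⟨castNe _ _ (by omega) (by omega), castNe _ _ (by omega) (by omega)⟩
    rw [if_neg hcond]
    have hGkt : G k t = if N ≤ k + 1 + t then s (k + 1 + t - N) else 0 := by
      simp only [hG]; rw [if_neg h0]
    rcases Nat.eq_zero_or_pos k with hk0 | hk1
    · subst hk0
      rw [hV0, hV0, hGkt, if_neg (by omega)]
      simp
    obtain ⟨j, rfl⟩ : ∃ j, k = j + 1 := ⟨k - 1, by omega⟩
    -- first argument equals G j (t+1) = G (j+1) t
    have e1 : V (j + 1) (((j + 1 : ℕ)) : ZMod N) (((j + 1 + 1 + t : ℕ)) : ZMod N)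
        = G j (t + 1) := by
      have a1 := hVstep j (((j + 1 : ℕ)) : ZMod N) (((j + 1 + 1 + t : ℕ)) : ZMod N)
      have a2 := hVstep j (((j : ℕ)) : ZMod N) (((j + 1 + 1 + t : ℕ)) : ZMod N)
      rw [if_pos (Or.inr rfl)] at a1
      rw [if_pos (Or.inl rfl)] at a2
      rw [a1, ← a2]
      have harg : (j + 1 + 1 + t : ℕ) = j + 1 + (t + 1) := by omega
      rw [harg]
      exact IH j (by omega) (t + 1) (by omega)
    have e1' : G j (t + 1) = G (j + 1) t := by
      simp only [hG]
      rw [if_neg (Nat.succ_ne_zero t), if_neg h0]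
      have h2 : (j + 1 + (t + 1)) = (j + 1 + 1 + t) := by omega
      rw [h2]
    -- second argument
    by_cases hbig : N ≤ j + 2
    · -- robot j+2 last met at event j+2-N
      have hc : (((j + 1 + 1 : ℕ)) : ZMod N) = (((j + 2 - N : ℕ)) : ZMod N) :=
        castEq _ _ (by omega)
      have e2 : V (j + 1) (((j + 1 + 1 : ℕ)) : ZMod N) (((j + 1 + 1 + t : ℕ)) : ZMod N)
          = G (j + 2 - N) (t - 1) := by
        rw [hc]
        have hst := stab (((j + 2 - N : ℕ)) : ZMod N) (j + 3 - N) (N - 2)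
          (by
            intro m h1 h2
            constructor
            · exact fun hx => castNe m (j + 2 - N) (by omega) (by omega) hx.symm
            · exact fun hx => castNe (m + 1) (j + 2 - N) (by omega) (by omega) hx.symm)
          ((((j + 1 + 1 + t : ℕ)) : ZMod N))
        rw [show (j + 3 - N) + (N - 2) = j + 1 by omega] at hst
        rw [hst]
        have harg : (((j + 1 + 1 + t : ℕ)) : ZMod N)
            = (((j + 2 - N + 1 + (t - 1) : ℕ)) : ZMod N) := castEq _ _ (by omega)
        rw [harg, show j + 3 - N = (j + 2 - N) + 1 by omega]
        exact IH (j + 2 - N) (by omega) (t - 1) (by omega)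
      rw [e1, e1', e2]
      -- max (G (j+1) t) (G (j+2-N) (t-1)) = G (j+1) t
      apply max_eq_left
      have hR : G (j + 1) t = s (j + 1 + 1 + t - N) := by
        simp only [hG]
        rw [if_neg h0, if_pos (by omega)]
      rw [hR]
      simp only [hG]
      split_ifs with h1 h2
      · exact hsmono.monotone (by omega)
      · exact hsmono.monotone (by omega)
      · exact (hspos _).le
    · -- robot j+2 never met yet
      have e2 : V (j + 1) (((j + 1 + 1 : ℕ)) : ZMod N) (((j + 1 + 1 + t : ℕ)) : ZMod N)
          = 0 := by
        have hst := stab (((j + 1 + 1 : ℕ)) : ZMod N) 0 (j + 1)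
          (by
            intro m h1 h2
            constructor
            · exact castNe (j + 1 + 1) m (by omega) (by omega)
            · exact castNe (j + 1 + 1) (m + 1) (by omega) (by omega))
          ((((j + 1 + 1 + t : ℕ)) : ZMod N))
        rw [zero_add] at hst
        rw [hst, hV0]
      rw [e1, e1', e2]
      exact max_eq_left (Gnonneg _ _)
  -- general-coordinate form
  have key' : ∀ k (n : ZMod N),
      V (k + 1) ((k : ℕ) : ZMod N) n = G k ((n - (((k + 1 : ℕ)) : ZMod N)).val) := by
    intro k n
    have hn : (((k + 1 + (n - (((k + 1 : ℕ)) : ZMod N)).val : ℕ)) : ZMod N) = n := by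
      push_cast [ZMod.natCast_val, ZMod.cast_id]
      ring_nf
    have hk := key k ((n - (((k + 1 : ℕ)) : ZMod N)).val) (ZMod.val_lt _)
    rw [hn] at hk
    exact hk
  -- part (a)
  have parta : ∀ k : ℕ, N - 2 ≤ k →
      Finset.univ.inf' Finset.univ_nonempty (fun n => V (k + 1) (k : ZMod N) n)
        = s (k + 2 - N) := by
    intro k hk
    apply le_antisymm
    · calc Finset.univ.inf' Finset.univ_nonempty (fun n => V (k + 1) (k : ZMod N) n)
          ≤ V (k + 1) (k : ZMod N) (((k + 1 + 1 : ℕ)) : ZMod N) :=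
            Finset.inf'_le _ (Finset.mem_univ _)
        _ = G k 1 := key k 1 (by omega)
        _ = s (k + 2 - N) := by
            simp only [hG]
            rw [if_neg one_ne_zero, if_pos (by omega)]
    · apply Finset.le_inf'
      intro n _
      rw [key' k n]
      set t := (n - (((k + 1 : ℕ)) : ZMod N)).val with htdef
      have ht : t < N := ZMod.val_lt _
      simp only [hG]
      by_cases h0 : t = 0
      · rw [if_pos h0]
        exact hsmono.monotone (by omega)
      · rw [if_neg h0, if_pos (by omega)]
        exact hsmono.monotone (by omega)
  refine ⟨parta, ?_, ?_⟩
  · -- part (b)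
    intro k hk
    apply le_antisymm
    · calc Finset.univ.inf' Finset.univ_nonempty (fun n => V (k + 1) (k : ZMod N) n)
          ≤ V (k + 1) (k : ZMod N) (((k + 1 + 1 : ℕ)) : ZMod N) :=
            Finset.inf'_le _ (Finset.mem_univ _)
        _ = G k 1 := key k 1 (by omega)
        _ = 0 := by
            simp only [hG]
            rw [if_neg one_ne_zero, if_neg (by omega)]
    · apply Finset.le_inf'
      intro n _
      rw [key' k n]
      exact Gnonneg _ _
  · -- part (c)
    intro k k' hk hkk'
    rw [parta k hk, parta k' (by omega)]
    exact hsmono (by omega)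
end

section
/- Consider the cyclic gossip model with N ≥ 2 robots and strictly increasing positive event times s_0 < s_1 < ⋯. Suppose there is a strictly increasing sequence of return indices N − 2 ≤ k_1 < k_2 < ⋯ and return times τ_1 < τ_2 < ⋯ with s_{k_m} ≤ τ_m for all m and τ_m → ∞, and that at time τ_m one participant of event k_m delivers the participants' common post-event vector V_{k_m+1}(k_m mod N) to the operator, whose knowledge is U(t)(n) = maximum of 0 and all delivered values V_{k_m+1}(k_m mod N)(n) over m with τ_m ≤ t. Let T > 0. If τ_1 ≤ T and τ_m ≤ T + s_{k_{m−1} − N + 2} for all m ≥ 2, then the operator's latency satisfies max over n ∈ ZMod N of (t − U(t)(n)) ≤ T for all t ≥ 0. -/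
/-- Lemma 1 (abstract content): along the cyclic gossip protocol, if the return
robots deliver the participants' common post-event vectors to the operator and
the return times satisfy `τ 1 ≤ T` and `τ m ≤ T + s (k (m-1) + 2 - N)` for
`m ≥ 2`, then the operator's maximum latency is bounded by `T` at all times. -/
theorem gossip_return_events_guarantee_latency_bound
    (N : ℕ) [NeZero N] (hN : 2 ≤ N)
    (s : ℕ → ℝ) (hs0 : 0 < s 0) (hsmono : StrictMono s)
    (V : ℕ → ZMod N → ZMod N → ℝ)
    (hV0 : ∀ i n : ZMod N, V 0 i n = 0)
    (hVstep : ∀ (k : ℕ) (i n : ZMod N),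
      V (k + 1) i n =
        if i = (k : ZMod N) ∨ i = ((k + 1 : ℕ) : ZMod N) then
          (if n = (k : ZMod N) ∨ n = ((k + 1 : ℕ) : ZMod N) then s k
           else max (V k (k : ZMod N) n) (V k ((k + 1 : ℕ) : ZMod N) n))
        else V k i n)
    (k : ℕ → ℕ) (τ : ℕ → ℝ)
    (hk1 : N - 2 ≤ k 1)
    (hkmono : ∀ m, 1 ≤ m → k m < k (m + 1))
    (hτmono : ∀ m, 1 ≤ m → τ m < τ (m + 1))
    (hsτ : ∀ m, 1 ≤ m → s (k m) ≤ τ m)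
    (hτinf : Filter.Tendsto τ Filter.atTop Filter.atTop)
    (U : ℝ → ZMod N → ℝ)
    (hU : ∀ (t : ℝ) (n : ZMod N),
      U t n = sSup (insert (0 : ℝ)
        {x | ∃ m, 1 ≤ m ∧ τ m ≤ t ∧ x = V (k m + 1) ((k m : ℕ) : ZMod N) n}))
    (T : ℝ) (hT : 0 < T)
    (hτ1 : τ 1 ≤ T)
    (hτm : ∀ m, 2 ≤ m → τ m ≤ T + s (k (m - 1) + 2 - N)) :
    ∀ t : ℝ, 0 ≤ t →
      Finset.univ.sup' Finset.univ_nonempty (fun n => t - U t n) ≤ T := by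
  classical
  -- common post-event vector
  have hcomm : ∀ (j : ℕ) (n : ZMod N),
      V (j + 1) ((j : ℕ) : ZMod N) n = V (j + 1) (((j + 1 : ℕ)) : ZMod N) n := by
    intro j n
    rw [hVstep, hVstep, if_pos (Or.inl rfl), if_pos (Or.inr rfl)]
  -- upper bound on entries
  have hVle : ∀ (j : ℕ) (i n : ZMod N), V (j + 1) i n ≤ s j := by
    intro j
    induction j with
    | zero =>
      intro i n
      rw [hVstep]
      split_ifs
      · exact le_rfl
      · rw [hV0, hV0]; simpa using hs0.le
      · rw [hV0]; exact hs0.le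
    | succ j ih =>
      intro i n
      have hmono : s j ≤ s (j + 1) := hsmono.monotone (Nat.le_succ j)
      rw [hVstep]
      split_ifs
      · exact le_rfl
      · exact le_trans (max_le (ih _ _) (ih _ _)) hmono
      · exact le_trans (ih _ _) hmono
  -- key propagation lemma
  have hkey : ∀ (b d : ℕ), ∀ n : ZMod N,
      (∃ r ≤ d + 1, n = ((b + r : ℕ) : ZMod N)) →
      s b ≤ V (b + d + 1) ((b + d : ℕ) : ZMod N) n := by
    intro b d
    induction d with
    | zero =>
      rintro n ⟨r, hr, hn⟩
      simp only [Nat.add_zero]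
      rw [hVstep, if_pos (Or.inl rfl)]
      split_ifs with hcond
      · exact le_rfl
      · exfalso
        interval_cases r
        · exact hcond (Or.inl (by simpa using hn))
        · exact hcond (Or.inr (by simpa using hn))
    | succ d ih =>
      rintro n ⟨r, hr, hn⟩
      rw [show b + (d + 1) = b + d + 1 from rfl, hVstep, if_pos (Or.inl rfl)]
      split_ifs with hcond
      · exact hsmono.monotone (by omega)
      · have hr' : r ≤ d + 1 := by
          by_contra hc
          have hrr : r = d + 2 := by omega
          exact hcond (Or.inr (by rw [hn, hrr]; congr 1))
        exact le_trans (le_trans (ih n ⟨r, hr', hn⟩) (le_of_eq (hcomm (b + d) n)))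
          (le_max_left _ _)
  have hkey' : ∀ (j : ℕ), N - 2 ≤ j → ∀ n : ZMod N,
      s (j + 2 - N) ≤ V (j + 1) ((j : ℕ) : ZMod N) n := by
    intro j hj n
    have hb : (j + 2 - N) + (N - 2) = j := by omega
    obtain ⟨r, hr, hn⟩ : ∃ r ≤ (N - 2) + 1, n = (((j + 2 - N) + r : ℕ) : ZMod N) := by
      refine ⟨(n - ((j + 2 - N : ℕ) : ZMod N)).val, ?_, ?_⟩
      · have := ZMod.val_lt (n - ((j + 2 - N : ℕ) : ZMod N))
        omega
      · push_cast
        rw [ZMod.natCast_val, ZMod.cast_id]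
        ring
    have h := hkey (j + 2 - N) (N - 2) n ⟨r, hr, hn⟩
    rwa [hb] at h
  -- main argument
  intro t ht
  apply Finset.sup'_le
  intro n _
  have hUS := hU t n
  have hbdd : BddAbove (insert (0 : ℝ)
      {x | ∃ m, 1 ≤ m ∧ τ m ≤ t ∧ x = V (k m + 1) ((k m : ℕ) : ZMod N) n}) := by
    refine ⟨t, ?_⟩
    rintro x (rfl | ⟨m, hm1, hmt, rfl⟩)
    · exact ht
    · exact le_trans (hVle _ _ _) (le_trans (hsτ m hm1) hmt)
  have h0 : (0 : ℝ) ≤ U t n := by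
    rw [hUS]; exact le_csSup hbdd (Set.mem_insert _ _)
  rcases le_or_gt t T with hcase | hcase
  · linarith
  · obtain ⟨M0, hM0⟩ := Filter.eventually_atTop.1 (hτinf.eventually_gt_atTop t)
    set P : ℕ → Prop := fun m => 1 ≤ m ∧ τ m ≤ t with hP
    have hP1 : P 1 := ⟨le_rfl, le_trans hτ1 hcase.le⟩
    have hPbd : ∀ m, P m → m < M0 := by
      intro m hm
      by_contra hc
      exact absurd (hM0 m (le_of_not_gt hc)) (not_lt.2 hm.2)
    have h1M0 : 1 < M0 := hPbd 1 hP1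
    set M := Nat.findGreatest P M0 with hM
    have hPM : P M := Nat.findGreatest_spec h1M0.le hP1
    have hM1 : 1 ≤ M := hPM.1
    have hnot : ¬ P (M + 1) := by
      rcases le_or_gt (M + 1) M0 with hle | hlt
      · exact Nat.findGreatest_is_greatest (Nat.lt_succ_self M) hle
      · intro hp; exact absurd (hPbd _ hp) (not_lt.2 hlt.le)
    have htlt : t < τ (M + 1) := lt_of_not_ge (fun hc => hnot ⟨by omega, hc⟩)
    have hτM1 := hτm (M + 1) (by omega)
    simp only [Nat.add_sub_cancel] at hτM1
    have hk1M : k 1 ≤ k M := by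
      have hmonoall : ∀ m, 1 ≤ m → k 1 ≤ k m := by
        intro m hm
        induction m with
        | zero => omega
        | succ p ih =>
          rcases Nat.lt_or_ge 1 (p + 1) with hlt | hle
          · have hp : 1 ≤ p := by omega
            exact le_trans (ih hp) (hkmono p hp).le
          · have hpe : p + 1 = 1 := by omega
            rw [hpe]
      exact hmonoall M hM1
    have hkM : N - 2 ≤ k M := le_trans hk1 hk1M
    have hVU : V (k M + 1) ((k M : ℕ) : ZMod N) n ≤ U t n := by
      rw [hUS]
      exact le_csSup hbdd (Set.mem_insert_iff.2 (Or.inr ⟨M, hM1, hPM.2, rfl⟩))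
    have hsV := hkey' (k M) hkM n
    linarith
end
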